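/- Let a, b > 0 be real numbers, c = √(a² + b²), and let α be a real number with α ≥ g(c, a/c), where g(r,u) := 2·log_{(1+r)u/(1+ru)} u and log_b x denotes the base-b logarithm (ln x)/(ln b). Then for all real r, u with r > 0, 0 < u < 1, r·u ≤ a, and r·√(1 − u²) ≤ b, one has ((1 + r)·u/(1 + r·u))^α ≤ u². -/

import Mathlib

set_option maxHeartbeats 1600000

-- two-term Hölder
lemma holder2 {x y l : ℝ} (hx : 0 ≤ x) (hy : 0 ≤ y) (hl : 0 ≤ l) (hl1 : l ≤ 1) :
    1 + x ^ (1 - l) * y ^ l ≤ (1 + x) ^ (1 - l) * (1 + y) ^ l := by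
  have hX : (0:ℝ) < 1 + x := by linarith
  have hY : (0:ℝ) < 1 + y := by linarith
  have hw : (1 - l) + l = 1 := by ring
  have h1 := Real.geom_mean_le_arith_mean2_weighted (by linarith : (0:ℝ) ≤ 1 - l) hl
    (le_of_lt (by positivity : (0:ℝ) < 1/(1+x))) (le_of_lt (by positivity : (0:ℝ) < 1/(1+y))) hw
  have h2 := Real.geom_mean_le_arith_mean2_weighted (by linarith : (0:ℝ) ≤ 1 - l) hl
    (by positivity : (0:ℝ) ≤ x/(1+x)) (by positivity : (0:ℝ) ≤ y/(1+y)) hw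
  have e1 : (1/(1+x)) ^ (1-l) * (1/(1+y)) ^ l = 1 / ((1+x) ^ (1-l) * (1+y) ^ l) := by
    rw [Real.div_rpow zero_le_one hX.le, Real.div_rpow zero_le_one hY.le,
      Real.one_rpow, Real.one_rpow]
    rw [div_mul_div_comm, one_mul]
  have e2 : (x/(1+x)) ^ (1-l) * (y/(1+y)) ^ l
      = (x ^ (1-l) * y ^ l) / ((1+x) ^ (1-l) * (1+y) ^ l) := by
    rw [Real.div_rpow hx hX.le, Real.div_rpow hy hY.le, div_mul_div_comm]
  rw [e1] at h1; rw [e2] at h2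
  have hD : (0:ℝ) < (1+x) ^ (1-l) * (1+y) ^ l := by positivity
  rw [← div_le_one hD, add_div]
  have hr : (1-l) * (1/(1+x)) + l * (1/(1+y)) + ((1-l) * (x/(1+x)) + l * (y/(1+y))) = 1 := by
    field_simp; ring
  calc 1 / ((1+x) ^ (1-l) * (1+y) ^ l) + (x ^ (1-l) * y ^ l) / ((1+x) ^ (1-l) * (1+y) ^ l)
      ≤ (1-l) * (1/(1+x)) + l * (1/(1+y)) + ((1-l) * (x/(1+x)) + l * (y/(1+y))) := by
        exact add_le_add h1 h2
    _ = 1 := hr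

-- monotonicity in r
lemma mono_r {r R u : ℝ} (hr : 0 ≤ r) (hrR : r ≤ R) (hu : 0 < u) (hu1 : u ≤ 1) :
    Real.log (1+r) - Real.log (1+r*u) ≤ Real.log (1+R) - Real.log (1+R*u) := by
  have h1 : (0:ℝ) < 1 + r := by linarith
  have h2 : (0:ℝ) < 1 + r*u := by nlinarith
  have h3 : (0:ℝ) < 1 + R := by linarith
  have h4 : (0:ℝ) < 1 + R*u := by nlinarith
  rw [sub_le_sub_iff, ← Real.log_mul h1.ne' h4.ne', ← Real.log_mul h3.ne' h2.ne']
  apply Real.log_le_log (by positivity)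
  nlinarith [mul_nonneg (sub_nonneg.2 hrR) (sub_nonneg.2 hu1)]

-- (1+a) log((1+c)/(1+a)) ≥ a log(c/a)
lemma Kb {a c : ℝ} (ha : 0 < a) (hac : a < c) :
    a * (Real.log c - Real.log a) ≤ (1+a) * (Real.log (1+c) - Real.log (1+a)) := by
  have h1a : (0:ℝ) < 1 + a := by linarith
  have h1c : (0:ℝ) < 1 + c := by linarith
  have hc : (0:ℝ) < c := lt_trans ha hac
  have hb1 : Real.log ((1+a)/(1+c)) ≤ (1+a)/(1+c) - 1 :=
    Real.log_le_sub_one_of_pos (by positivity)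
  have hb2 : Real.log ((c*(1+a))/(a*(1+c))) ≤ (c*(1+a))/(a*(1+c)) - 1 :=
    Real.log_le_sub_one_of_pos (by positivity)
  rw [Real.log_div h1a.ne' h1c.ne'] at hb1
  rw [Real.log_div (by positivity) (by positivity), Real.log_mul hc.ne' h1a.ne',
    Real.log_mul ha.ne' h1c.ne'] at hb2
  have e1 : (1+a)/(1+c) - 1 = (a-c)/(1+c) := by field_simp; ring
  have e2 : (c*(1+a))/(a*(1+c)) - 1 = (c-a)/(a*(1+c)) := by field_simp; ring
  rw [e1] at hb1; rw [e2] at hb2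
  have hb2' := mul_le_mul_of_nonneg_left hb2 ha.le
  have e3 : a * ((c-a)/(a*(1+c))) = (c-a)/(1+c) := by field_simp
  rw [e3] at hb2'
  have hb1' : (c-a)/(1+c) ≤ Real.log (1+c) - Real.log (1+a) := by
    have h : -((a-c)/(1+c)) = (c-a)/(1+c) := by ring
    linarith
  nlinarith [hb1', hb2']

-- the core inequality H * L₀ ≤ H₀ * (-log u)
lemma core_aux (a b c r u : ℝ) (ha : 0 < a) (hb : 0 < b) (hc0 : 0 < c)
    (hc2 : c ^ 2 = a ^ 2 + b ^ 2)
    (hr : 0 < r) (hu : 0 < u) (hu1 : u < 1) (hru : r * u ≤ a)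
    (hrs : r * Real.sqrt (1 - u ^ 2) ≤ b) :
    (Real.log (1+r) - Real.log (1+r*u)) * (Real.log c - Real.log a)
      ≤ (Real.log (1+c) - Real.log (1+a)) * (-Real.log u) := by
  have hac : a < c := by nlinarith
  have h1a : (0:ℝ) < 1 + a := by linarith
  have h1c : (0:ℝ) < 1 + c := by linarith
  have hlogu : Real.log u < 0 := Real.log_neg hu hu1
  obtain ⟨La, hLa⟩ : ∃ x, x = Real.log c - Real.log a := ⟨_, rfl⟩
  obtain ⟨Ha, hHa⟩ : ∃ x, x = Real.log (1+c) - Real.log (1+a) := ⟨_, rfl⟩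
  rw [← hLa, ← hHa]
  have hL0 : 0 < La := by rw [hLa]; exact sub_pos.2 (Real.log_lt_log ha hac)
  have hH0 : 0 < Ha := by rw [hHa]; exact sub_pos.2 (Real.log_lt_log h1a (by linarith))
  have hHL : Ha < La := by
    have h := Real.log_lt_log (by positivity : (0:ℝ) < (1+c)*a)
      (by nlinarith : (1+c)*a < (1+a)*c)
    rw [Real.log_mul h1c.ne' ha.ne', Real.log_mul h1a.ne' hc0.ne'] at h
    rw [hLa, hHa]; linarith
  rcases le_total u (a/c) with hcase | hcase
  · -- arc 2 : u ≤ a/c, use r ≤ b/s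
    have hu2 : u ^ 2 < 1 := by nlinarith
    have hcu : u * c ≤ a := (le_div_iff₀ hc0).1 hcase
    obtain ⟨s, hs0, hs2, hrsb⟩ : ∃ s, 0 < s ∧ s ^ 2 = 1 - u ^ 2 ∧ r * s ≤ b :=
      ⟨Real.sqrt (1 - u ^ 2), Real.sqrt_pos.2 (by linarith),
        Real.sq_sqrt (by linarith), hrs⟩
    have hrR : r ≤ b/s := (le_div_iff₀ hs0).2 hrsb
    have step1 : Real.log (1+r) - Real.log (1+r*u)
        ≤ Real.log (s+b) - Real.log (s+b*u) := by
      have h := mono_r hr.le hrR hu hu1.le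
      have e1 : 1 + b/s = (s+b)/s := by field_simp
      have e2 : 1 + (b/s)*u = (s+b*u)/s := by field_simp
      rw [e1, e2, Real.log_div (by positivity : (0:ℝ) < s+b).ne' hs0.ne',
        Real.log_div (by positivity : (0:ℝ) < s+b*u).ne' hs0.ne'] at h
      linarith
    obtain ⟨K, hKdef⟩ : ∃ x, x = Ha/La := ⟨_, rfl⟩
    have hK0 : 0 < K := by rw [hKdef]; exact div_pos hH0 hL0
    have hK1 : K ≤ 1 := by rw [hKdef, div_le_one hL0]; linarith
    have hKLa : K * La = Ha := by rw [hKdef]; field_simp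
    obtain ⟨m, hmdef⟩ : ∃ x, x = (1+a)/(1+c) := ⟨_, rfl⟩
    have hm0 : 0 < m := by rw [hmdef]; positivity
    have hm1 : m ≤ 1 := by rw [hmdef, div_le_one h1c]; linarith
    have hKa : a ≤ (1+a)*K := by
      have hk : a * La ≤ (1+a) * Ha := by rw [hLa, hHa]; exact Kb ha hac
      rw [hKdef, ← mul_div_assoc, le_div_iff₀ hL0]
      linarith
    have hu0K : (a/c : ℝ) ^ K = m := by
      rw [Real.rpow_def_of_pos (by positivity), Real.log_div ha.ne' hc0.ne',
        show (Real.log a - Real.log c) * K = -(K*La) from by rw [hLa]; ring, hKLa,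
        show -Ha = Real.log ((1+a)/(1+c)) from by
          rw [Real.log_div h1a.ne' h1c.ne', hHa]; ring,
        Real.exp_log (by positivity), hmdef]
    have hukc : u ^ K ≤ m * (1-K) + m * K * ((c/a) * u) := by
      have hsplit : u = (a/c) * ((c/a)*u) := by field_simp
      have hrp : u ^ K = (a/c) ^ K * ((c/a)*u) ^ K := by
        rw [← Real.mul_rpow (by positivity) (by positivity), ← hsplit]
      have hb2 := Real.geom_mean_le_arith_mean2_weighted
        (by linarith : (0:ℝ) ≤ 1-K) hK0.le zero_le_one
        (by positivity : (0:ℝ) ≤ (c/a)*u) (by ring)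
      rw [Real.one_rpow, one_mul] at hb2
      rw [hrp, hu0K]
      calc m * ((c/a)*u) ^ K ≤ m * ((1-K)*1 + K*((c/a)*u)) :=
            mul_le_mul_of_nonneg_left hb2 hm0.le
        _ = m*(1-K) + m*K*((c/a)*u) := by ring
    have hbc : b/c ≤ s := by
      have h1 : (b/c)^2 ≤ s^2 := by
        rw [hs2, div_pow, div_le_iff₀ (by positivity : (0:ℝ) < c^2)]
        nlinarith [hcu, mul_nonneg hu.le hc0.le]
      exact (abs_le_of_sq_le_sq' h1 hs0.le).2
    have halg : (s+b) * (m*(1-K) + m*K*((c/a)*u)) ≤ s + b*u := by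
      have hne1 : a ≠ 0 := ha.ne'
      have hne2 : c ≠ 0 := hc0.ne'
      have hne3 : (1+c) ≠ 0 := h1c.ne'
      have hid : s + b*u - (s+b) * (m*(1-K) + m*K*((c/a)*u))
          = (s - b/c)*(1 - m*(1-K) - m*K*((c/a)*u))
            + (b/a)*((1+a)*K - a)*(a/c - u) := by
        rw [hmdef]; field_simp; ring
      have t2 : 0 ≤ (b/a)*((1+a)*K - a)*(a/c - u) :=
        mul_nonneg (mul_nonneg (by positivity) (by linarith)) (by linarith)
      have hcu1 : (c/a)*u ≤ 1 := by
        rw [div_mul_eq_mul_div, div_le_one ha]; linarith [hcu]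
      have hfac : 0 ≤ 1 - m*(1-K) - m*K*((c/a)*u) := by
        nlinarith [mul_nonneg hm0.le hK0.le,
          mul_le_mul_of_nonneg_left hcu1 (mul_nonneg hm0.le hK0.le)]
      have t1 : 0 ≤ (s - b/c)*(1 - m*(1-K) - m*K*((c/a)*u)) :=
        mul_nonneg (by linarith) hfac
      linarith [hid, t1, t2]
    have hsb : (0:ℝ) < s + b := by linarith
    have huK : (0:ℝ) < u ^ K := Real.rpow_pos_of_pos hu K
    have hfin : (s+b) * u ^ K ≤ s + b*u :=
      le_trans (mul_le_mul_of_nonneg_left hukc hsb.le) halg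
    have hlog2 : Real.log (s+b) + K * Real.log u ≤ Real.log (s+b*u) := by
      have h := Real.log_le_log (by positivity) hfin
      rw [Real.log_mul hsb.ne' huK.ne', Real.log_rpow hu] at h
      linarith
    have step2 : Real.log (1+r) - Real.log (1+r*u) ≤ K * (-Real.log u) := by
      have hx : K * (-Real.log u) = -(K * Real.log u) := by ring
      linarith
    calc (Real.log (1+r) - Real.log (1+r*u)) * La ≤ (K * (-Real.log u)) * La :=
          mul_le_mul_of_nonneg_right step2 hL0.le
      _ = Ha * (-Real.log u) := by rw [← hKLa]; ring
  · -- arc 1 : a/c ≤ u, use r ≤ a/u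
    have hrR : r ≤ a/u := (le_div_iff₀ hu).2 hru
    have step1 : Real.log (1+r) - Real.log (1+r*u)
        ≤ Real.log (u+a) - Real.log u - Real.log (1+a) := by
      have h := mono_r hr.le hrR hu hu1.le
      have e1 : 1 + a/u = (u+a)/u := by field_simp
      have e2 : 1 + (a/u)*u = 1 + a := by field_simp
      rw [e1, e2, Real.log_div (by positivity : (0:ℝ) < u+a).ne' hu.ne'] at h
      linarith
    obtain ⟨lam, hlam⟩ : ∃ x, x = (-Real.log u)/La := ⟨_, rfl⟩
    have hlam0 : 0 ≤ lam := by rw [hlam]; exact div_nonneg (by linarith) hL0.le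
    have hlam1 : lam ≤ 1 := by
      rw [hlam, div_le_one hL0]
      have h := Real.log_le_log (by positivity : (0:ℝ) < a/c) hcase
      rw [Real.log_div ha.ne' hc0.ne'] at h
      rw [hLa]; linarith
    have hlamLa : lam * La = -Real.log u := by rw [hlam]; field_simp
    have hac' : a ^ (1-lam) * c ^ lam = a/u := by
      rw [Real.rpow_def_of_pos ha, Real.rpow_def_of_pos hc0, ← Real.exp_add,
        show Real.log a * (1-lam) + Real.log c * lam = Real.log a + lam * La from by
          rw [hLa]; ring,
        hlamLa,
        show Real.log a + -Real.log u = Real.log a - Real.log u from by ring,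
        Real.exp_sub, Real.exp_log ha, Real.exp_log hu]
    have hold := holder2 ha.le hc0.le hlam0 hlam1
    rw [hac'] at hold
    have hlog1 : Real.log (1 + a/u) ≤ (1-lam)*Real.log (1+a) + lam*Real.log (1+c) := by
      have h := Real.log_le_log (by positivity) hold
      rw [Real.log_mul (Real.rpow_pos_of_pos h1a _).ne' (Real.rpow_pos_of_pos h1c _).ne',
        Real.log_rpow h1a, Real.log_rpow h1c] at h
      linarith
    have e1 : Real.log (1 + a/u) = Real.log (u+a) - Real.log u := by
      rw [show 1 + a/u = (u+a)/u from by field_simp,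
        Real.log_div (by positivity : (0:ℝ) < u+a).ne' hu.ne']
    have step2 : Real.log (1+r) - Real.log (1+r*u) ≤ lam * Ha := by
      rw [e1] at hlog1
      rw [hHa]
      nlinarith [step1, hlog1]
    calc (Real.log (1+r) - Real.log (1+r*u)) * La ≤ (lam * Ha) * La :=
          mul_le_mul_of_nonneg_right step2 hL0.le
      _ = Ha * (-Real.log u) := by rw [← hlamLa]; ring

theorem stmt_8 (a b α : ℝ) (ha : 0 < a) (hb : 0 < b)
    (hα : α ≥ 2 * Real.logb
      ((1 + Real.sqrt (a ^ 2 + b ^ 2)) * (a / Real.sqrt (a ^ 2 + b ^ 2)) /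
        (1 + Real.sqrt (a ^ 2 + b ^ 2) * (a / Real.sqrt (a ^ 2 + b ^ 2))))
      (a / Real.sqrt (a ^ 2 + b ^ 2))) :
    ∀ r u : ℝ, 0 < r → 0 < u → u < 1 → r * u ≤ a → r * Real.sqrt (1 - u ^ 2) ≤ b →
      ((1 + r) * u / (1 + r * u)) ^ α ≤ u ^ 2 := by
  obtain ⟨c, hc0, hc2, hcs⟩ : ∃ c, 0 < c ∧ c ^ 2 = a ^ 2 + b ^ 2
      ∧ c = Real.sqrt (a ^ 2 + b ^ 2) :=
    ⟨Real.sqrt (a ^ 2 + b ^ 2), Real.sqrt_pos.2 (by positivity),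
      Real.sq_sqrt (by positivity), rfl⟩
  rw [← hcs] at hα
  have hac : a < c := by nlinarith
  have h1a : (0:ℝ) < 1 + a := by linarith
  have h1c : (0:ℝ) < 1 + c := by linarith
  obtain ⟨La, hLa⟩ : ∃ x, x = Real.log c - Real.log a := ⟨_, rfl⟩
  obtain ⟨Ha, hHa⟩ : ∃ x, x = Real.log (1+c) - Real.log (1+a) := ⟨_, rfl⟩
  have hL0 : 0 < La := by rw [hLa]; exact sub_pos.2 (Real.log_lt_log ha hac)
  have hH0 : 0 < Ha := by rw [hHa]; exact sub_pos.2 (Real.log_lt_log h1a (by linarith))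
  have hHL : Ha < La := by
    have h := Real.log_lt_log (by positivity : (0:ℝ) < (1+c)*a)
      (by nlinarith : (1+c)*a < (1+a)*c)
    rw [Real.log_mul h1c.ne' ha.ne', Real.log_mul h1a.ne' hc0.ne'] at h
    rw [hHa, hLa]; linarith
  have hα' : 2 * La / (La - Ha) ≤ α := by
    have hca : c * (a/c) = a := by field_simp
    rw [hca] at hα
    have hlogB0 : Real.log ((1+c)*(a/c)/(1+a)) = Ha - La := by
      rw [Real.log_div (by positivity : (0:ℝ) < (1+c)*(a/c)).ne' h1a.ne',
        Real.log_mul h1c.ne' (by positivity : (0:ℝ) < a/c).ne',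
        Real.log_div ha.ne' hc0.ne', hHa, hLa]
      ring
    have hlb : Real.logb ((1+c)*(a/c)/(1+a)) (a/c) = La/(La-Ha) := by
      rw [Real.logb, hlogB0, Real.log_div ha.ne' hc0.ne',
        show Real.log a - Real.log c = -La from by rw [hLa]; ring,
        show Ha - La = -(La-Ha) from by ring, neg_div_neg_eq]
    rw [hlb] at hα
    rw [mul_div_assoc]
    exact hα
  intro r u hr hu hu1 hru hrs
  have h1r : (0:ℝ) < 1 + r := by linarith
  have h1ru : (0:ℝ) < 1 + r*u := by positivity
  have hBpos : 0 < (1+r)*u/(1+r*u) := by positivity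
  have hB1 : (1+r)*u/(1+r*u) < 1 := by rw [div_lt_one h1ru]; nlinarith
  have hlogu : Real.log u < 0 := Real.log_neg hu hu1
  have hlogB : Real.log ((1+r)*u/(1+r*u))
      = (Real.log (1+r) - Real.log (1+r*u)) + Real.log u := by
    rw [Real.log_div (by positivity : (0:ℝ) < (1+r)*u).ne' h1ru.ne',
      Real.log_mul h1r.ne' hu.ne']
    ring
  have core := core_aux a b c r u ha hb hc0 hc2 hr hu hu1 hru hrs
  rw [← hLa, ← hHa] at core
  have hlogBneg : Real.log ((1+r)*u/(1+r*u)) < 0 := Real.log_neg hBpos hB1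
  have hD : (0:ℝ) < La - Ha := by linarith
  have s1 : Real.log ((1+r)*u/(1+r*u)) * α
      ≤ Real.log ((1+r)*u/(1+r*u)) * (2*La/(La-Ha)) :=
    mul_le_mul_of_nonpos_left hα' hlogBneg.le
  have s2 : Real.log ((1+r)*u/(1+r*u)) * (2*La/(La-Ha)) ≤ 2 * Real.log u := by
    rw [hlogB, ← mul_div_assoc, div_le_iff₀ hD]
    nlinarith [core]
  calc ((1+r)*u/(1+r*u)) ^ α = Real.exp (Real.log ((1+r)*u/(1+r*u)) * α) :=
        Real.rpow_def_of_pos hBpos α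
    _ ≤ u ^ 2 := by
        rw [← Real.exp_log (show (0:ℝ) < u^2 by positivity), Real.log_pow]
        apply Real.exp_le_exp.2
        push_cast
        linarith [s1, s2]
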